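/- Let N ≥ 1, let λ be a σ-finite Borel measure on ℝ^N, let M > 0 and let r : ℝ^N → (0, ∞) be measurable with r(x) ≤ M for all x, and let β ≥ 2 be such that for every x ∈ ℝ^N, sup{ r(x+v) : |v| ≤ 2M } ≤ (β−1)·r(x). Then for every α ≥ 0 and all measurable φ, ψ : ℝ^N → ℝ with ∫ φ^2 dλ ≤ 1 and ∫ ψ^2 dλ ≤ 1, one has ∫_{ℝ^N} ∫_{ℝ^N} |x−y|^α · 1{|x−y| ≤ r(x)+r(y)} · |φ(x)| · |ψ(y)| dλ(y) dλ(x) ≤ β^α · esssup_{x ∈ ℝ^N} ( r(x)^α · λ(B̄(x, β·r(x))) ), understood in [0,∞]. -/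

import Mathlib

open Real MeasureTheory ENNReal

set_option maxHeartbeats 1000000

/-- Bound on the `‖·‖_{{1}{2}}` norm of the power length kernel: for `φ, ψ` in the unit ball
of `L_2(λ)`,
`∫∫ |x-y|^α 1{|x-y| ≤ r(x)+r(y)} |φ(x)||ψ(y)| dλ(y)dλ(x)
   ≤ β^α esssup_x ( r(x)^α λ(B̄(x, β r(x))) )`. -/
theorem stmt_7 (N : ℕ) (hN : 1 ≤ N)
    (lam : Measure (EuclideanSpace ℝ (Fin N))) [SigmaFinite lam]
    (M : ℝ) (hM : 0 < M)
    (r : EuclideanSpace ℝ (Fin N) → ℝ) (hrmeas : Measurable r)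
    (hrpos : ∀ x, 0 < r x) (hrM : ∀ x, r x ≤ M)
    (β : ℝ) (hβ : 2 ≤ β)
    (hreg : ∀ x v, ‖v‖ ≤ 2 * M → r (x + v) ≤ (β - 1) * r x)
    (α : ℝ) (hα : 0 ≤ α)
    (φ ψ : EuclideanSpace ℝ (Fin N) → ℝ) (hφ : Measurable φ) (hψ : Measurable ψ)
    (hφ2 : (∫⁻ x, ENNReal.ofReal (φ x ^ 2) ∂lam) ≤ 1)
    (hψ2 : (∫⁻ x, ENNReal.ofReal (ψ x ^ 2) ∂lam) ≤ 1) :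
    (∫⁻ x, ∫⁻ y, ENNReal.ofReal (‖x - y‖ ^ α *
        (if ‖x - y‖ ≤ r x + r y then (1 : ℝ) else 0) * |φ x| * |ψ y|) ∂lam ∂lam) ≤
      ENNReal.ofReal (β ^ α) *
        essSup (fun x => ENNReal.ofReal (r x ^ α) * lam (Metric.closedBall x (β * r x)))
          lam := by
  classical
  set S : ℝ≥0∞ :=
    essSup (fun x => ENNReal.ofReal (r x ^ α) * lam (Metric.closedBall x (β * r x))) lam with hSdef
  set C : ℝ≥0∞ := ENNReal.ofReal (β ^ α) * S with hCdef
  set K : EuclideanSpace ℝ (Fin N) → EuclideanSpace ℝ (Fin N) → ℝ≥0∞ := fun x y =>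
    ENNReal.ofReal (‖x - y‖ ^ α * (if ‖x - y‖ ≤ r x + r y then (1 : ℝ) else 0)) with hKdef
  have hβ0 : (0 : ℝ) < β := by linarith
  -- measurability of the kernel
  have hKmeas : Measurable (Function.uncurry K) := by
    apply Measurable.ennreal_ofReal
    apply Measurable.mul
    · exact (Real.continuous_rpow_const hα).measurable.comp (measurable_fst.sub measurable_snd).norm
    · exact Measurable.ite
        (measurableSet_le (measurable_fst.sub measurable_snd).norm
          ((hrmeas.comp measurable_fst).add (hrmeas.comp measurable_snd)))
        measurable_const measurable_const
  have hKmeas1 : ∀ x, Measurable (K x) := fun x => hKmeas.of_uncurry_left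
  have hKsymm : ∀ x y, K x y = K y x := by
    intro x y
    simp only [hKdef]
    rw [norm_sub_rev, add_comm (r x)]
  -- pointwise kernel integral bound
  have hKbound : ∀ x, (∫⁻ y, K x y ∂lam) ≤
      ENNReal.ofReal (β ^ α) *
        (ENNReal.ofReal (r x ^ α) * lam (Metric.closedBall x (β * r x))) := by
    intro x
    have hle : ∀ y, K x y ≤ (Metric.closedBall x (β * r x)).indicator
        (fun _ => ENNReal.ofReal (β ^ α * r x ^ α)) y := by
      intro y
      by_cases h : ‖x - y‖ ≤ r x + r y
      · have hvM : ‖y - x‖ ≤ 2 * M := by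
          rw [norm_sub_rev]
          have h1 := hrM x; have h2 := hrM y; linarith
        have hry : r y ≤ (β - 1) * r x := by
          have := hreg x (y - x) hvM
          rwa [add_sub_cancel] at this
        have hxy : ‖x - y‖ ≤ β * r x := by nlinarith
        have hmem : y ∈ Metric.closedBall x (β * r x) := by
          rw [Metric.mem_closedBall, dist_eq_norm, norm_sub_rev]
          exact hxy
        rw [Set.indicator_of_mem hmem]
        simp only [hKdef, if_pos h, mul_one]
        apply ENNReal.ofReal_le_ofReal
        rw [← Real.mul_rpow hβ0.le (hrpos x).le]
        exact Real.rpow_le_rpow (norm_nonneg _) hxy hα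
      · simp [hKdef, if_neg h]
    calc (∫⁻ y, K x y ∂lam)
        ≤ ∫⁻ y, (Metric.closedBall x (β * r x)).indicator
            (fun _ => ENNReal.ofReal (β ^ α * r x ^ α)) y ∂lam := lintegral_mono hle
      _ = ENNReal.ofReal (β ^ α * r x ^ α) * lam (Metric.closedBall x (β * r x)) := by
          rw [lintegral_indicator measurableSet_closedBall, setLIntegral_const]
      _ = ENNReal.ofReal (β ^ α) *
            (ENNReal.ofReal (r x ^ α) * lam (Metric.closedBall x (β * r x))) := by
          rw [ENNReal.ofReal_mul (Real.rpow_nonneg hβ0.le α), mul_assoc]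
  have hae : ∀ᵐ x ∂lam, (∫⁻ y, K x y ∂lam) ≤ C := by
    filter_upwards [_root_.ae_le_essSup
      (f := fun x => ENNReal.ofReal (r x ^ α) * lam (Metric.closedBall x (β * r x)))
      (μ := lam)] with x hx
    exact (hKbound x).trans (mul_le_mul_right hx _)
  set F : EuclideanSpace ℝ (Fin N) → ℝ≥0∞ := fun x => ENNReal.ofReal (φ x ^ 2) with hFdef
  set G : EuclideanSpace ℝ (Fin N) → ℝ≥0∞ := fun y => ENNReal.ofReal (ψ y ^ 2) with hGdef
  have hFmeas : Measurable F := (hφ.pow_const 2).ennreal_ofReal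
  have hGmeas : Measurable G := (hψ.pow_const 2).ennreal_ofReal
  -- rewrite the integrand
  have hint : ∀ x y, ENNReal.ofReal (‖x - y‖ ^ α *
      (if ‖x - y‖ ≤ r x + r y then (1 : ℝ) else 0) * |φ x| * |ψ y|) =
      K x y * ENNReal.ofReal |φ x| * ENNReal.ofReal |ψ y| := by
    intro x y
    have h0 : (0 : ℝ) ≤ ‖x - y‖ ^ α * (if ‖x - y‖ ≤ r x + r y then (1 : ℝ) else 0) := by
      apply mul_nonneg (Real.rpow_nonneg (norm_nonneg _) _)
      split <;> norm_num
    rw [ENNReal.ofReal_mul (mul_nonneg h0 (abs_nonneg _)), ENNReal.ofReal_mul h0]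
  simp only [hint]
  -- pointwise AM-GM
  have hptwise : ∀ x y, 2 * (K x y * ENNReal.ofReal |φ x| * ENNReal.ofReal |ψ y|) ≤
      K x y * F x + K x y * G y := by
    intro x y
    rw [← mul_add]
    have h1 : 2 * (ENNReal.ofReal |φ x| * ENNReal.ofReal |ψ y|) ≤ F x + G y := by
      rw [← ENNReal.ofReal_mul (abs_nonneg _), hFdef, hGdef]
      simp only [← ENNReal.ofReal_add (sq_nonneg _) (sq_nonneg _)]
      calc 2 * ENNReal.ofReal (|φ x| * |ψ y|)
          = ENNReal.ofReal (2 * (|φ x| * |ψ y|)) := by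
            rw [ENNReal.ofReal_mul (by norm_num : (0:ℝ) ≤ 2)]
            norm_num
        _ ≤ ENNReal.ofReal (φ x ^ 2 + ψ y ^ 2) := by
            apply ENNReal.ofReal_le_ofReal
            nlinarith [sq_nonneg (|φ x| - |ψ y|), sq_abs (φ x), sq_abs (ψ y)]
    calc 2 * (K x y * ENNReal.ofReal |φ x| * ENNReal.ofReal |ψ y|)
        = K x y * (2 * (ENNReal.ofReal |φ x| * ENNReal.ofReal |ψ y|)) := by ring
      _ ≤ K x y * (F x + G y) := mul_le_mul_right h1 _
  -- reduce to doubling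
  rw [← ENNReal.mul_le_mul_iff_right (a := 2) two_ne_zero ENNReal.ofNat_ne_top]
  have hswapmeas : AEMeasurable
      (Function.uncurry fun x y => K x y * G y) (lam.prod lam) :=
    (hKmeas.mul (hGmeas.comp measurable_snd)).aemeasurable
  calc 2 * ∫⁻ x, ∫⁻ y, K x y * ENNReal.ofReal |φ x| * ENNReal.ofReal |ψ y| ∂lam ∂lam
      = ∫⁻ x, ∫⁻ y, 2 * (K x y * ENNReal.ofReal |φ x| * ENNReal.ofReal |ψ y|) ∂lam ∂lam := by
        rw [← lintegral_const_mul' _ _ ENNReal.ofNat_ne_top]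
        exact lintegral_congr fun x => (lintegral_const_mul' _ _ ENNReal.ofNat_ne_top).symm
    _ ≤ ∫⁻ x, ∫⁻ y, (K x y * F x + K x y * G y) ∂lam ∂lam :=
        lintegral_mono fun x => lintegral_mono fun y => hptwise x y
    _ = ∫⁻ x, ((∫⁻ y, K x y ∂lam) * F x + ∫⁻ y, K x y * G y ∂lam) ∂lam := by
        refine lintegral_congr fun x => ?_
        rw [lintegral_add_left ((hKmeas1 x).mul_const _),
          lintegral_mul_const' _ _ ENNReal.ofReal_ne_top]
    _ = (∫⁻ x, (∫⁻ y, K x y ∂lam) * F x ∂lam) + ∫⁻ x, ∫⁻ y, K x y * G y ∂lam ∂lam := by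
        rw [lintegral_add_left (f := fun x => (∫⁻ y, K x y ∂lam) * F x) ((Measurable.lintegral_prod_right hKmeas).mul hFmeas)]
    _ ≤ (∫⁻ x, C * F x ∂lam) + ∫⁻ y, C * G y ∂lam := by
        refine add_le_add ?_ ?_
        · exact lintegral_mono_ae (hae.mono fun x hx => mul_le_mul_left hx _)
        · rw [lintegral_lintegral_swap hswapmeas]
          refine lintegral_mono_ae ?_
          filter_upwards [hae] with y hy
          rw [lintegral_mul_const' _ _ ENNReal.ofReal_ne_top]
          have : (∫⁻ x, K x y ∂lam) = ∫⁻ x, K y x ∂lam :=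
            lintegral_congr fun x => hKsymm x y
          rw [this]
          exact mul_le_mul_left hy _
    _ ≤ C * 1 + C * 1 := by
        rw [lintegral_const_mul _ hFmeas, lintegral_const_mul _ hGmeas]
        exact add_le_add (mul_le_mul_right hφ2 _) (mul_le_mul_right hψ2 _)
    _ = 2 * C := by ring
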